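/- Let t ∈ V ⊗ W be a tensor with two independent (minimal) representations t = Σᵢ vᵢ ⊗ wᵢ = Σᵢ v'ᵢ ⊗ w'ᵢ (each with p summands, the v's a basis of the left span L_t and the w's a basis of the right span R_t). Let φ, φ' : L_t → R_t be the associated isomorphisms vᵢ ↦ wᵢ and v'ᵢ ↦ w'ᵢ. Then φ = φ' if and only if the transition matrix from (v₁,…,v_p) to (v'₁,…,v'_p) is orthogonal. Moreover, the bilinear form β : L_t × R_t → K defined by β(vᵢ, wⱼ) = δᵢⱼ is independent of the choice of independent representation. -/

import Mathlib

open TensorProduct Matrix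

lemma exists_dual_family {K V : Type*} [Field K] [AddCommGroup V] [Module K V] {p : ℕ}
    {v : Fin p → V} (hv : LinearIndependent K v) :
    ∃ f : Fin p → (V →ₗ[K] K), ∀ i j, f i (v j) = if i = j then 1 else 0 := by
  set S := Submodule.span K (Set.range v)
  obtain ⟨g, hg⟩ := S.subtype.exists_leftInverse_of_injective S.ker_subtype
  refine ⟨fun i => (Module.Basis.span hv).coord i ∘ₗ g, fun i j => ?_⟩
  have hmem : v j ∈ S := Submodule.subset_span ⟨j, rfl⟩
  have h1 : g (v j) = Module.Basis.span hv j := by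
    have := LinearMap.congr_fun hg ⟨v j, hmem⟩
    simp only [LinearMap.comp_apply, Submodule.subtype_apply, LinearMap.id_apply] at this
    rw [this]
    ext
    simp [Module.Basis.span_apply]
  simp [h1, Module.Basis.coord_apply, Module.Basis.repr_self, Finsupp.single_apply, eq_comm]

/-- let `t = Σ vᵢ ⊗ wᵢ = Σ v'ᵢ ⊗ w'ᵢ` be two independent (minimal)
representations of a tensor `t ∈ V ⊗ W` with `p` summands, and let `T` be the transition
matrix, `v'ᵢ = Σₕ Tₕᵢ vₕ`. Then the associated isomorphisms `φ : vᵢ ↦ wᵢ` and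
`φ' : v'ᵢ ↦ w'ᵢ` of the left span onto the right span coincide — equivalently
`w'ᵢ = Σₕ Tₕᵢ wₕ` for all `i` — if and only if `T` is orthogonal. Moreover the bilinear
form `β(vᵢ, wⱼ) = δᵢⱼ` on (left span) × (right span) is independent of the chosen
independent representation. -/
theorem stmt19 {K V W : Type*} [Field K] [AddCommGroup V] [Module K V]
    [AddCommGroup W] [Module K W] {p : ℕ}
    (v v' : Fin p → V) (w w' : Fin p → W)
    (hv : LinearIndependent K v) (hw : LinearIndependent K w)
    (hv' : LinearIndependent K v') (hw' : LinearIndependent K w')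
    (hrep : ∑ i, v i ⊗ₜ[K] w i = ∑ i, v' i ⊗ₜ[K] w' i)
    (T : Matrix (Fin p) (Fin p) K)
    (hT : ∀ i, v' i = ∑ h, T h i • v h) :
    ((∀ i, w' i = ∑ h, T h i • w h) ↔ Tᵀ * T = 1) ∧
      (∀ c c' d d' : Fin p → K,
        (∑ i, c i • v i) = (∑ i, c' i • v' i) →
        (∑ i, d i • w i) = (∑ i, d' i • w' i) →
        (∑ i, c i * d i) = (∑ i, c' i * d' i)) := by
  classical
  obtain ⟨f, hf⟩ := exists_dual_family hv
  -- key : w h = ∑ i, T h i • w' i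
  have hkey : ∀ h, w h = ∑ i, T h i • w' i := by
    intro h
    have := congrArg (TensorProduct.lift ((LinearMap.lsmul K W).comp (f h))) hrep
    simp only [map_sum, TensorProduct.lift.tmul, LinearMap.comp_apply,
      LinearMap.lsmul_apply] at this
    calc w h = ∑ i, f h (v i) • w i := by
              simp [hf, ite_smul, Finset.sum_ite_eq]
      _ = ∑ i, f h (v' i) • w' i := this
      _ = ∑ i, T h i • w' i := by
              refine Finset.sum_congr rfl fun i _ => ?_
              simp [hT i, map_sum, hf, mul_ite, Finset.sum_ite_eq']
  constructor
  · constructor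
    · intro hww'
      -- show T * Tᵀ = 1 first
      have hTT : T * Tᵀ = 1 := by
        ext h k
        have h0 : ∑ g : Fin p, ((T * Tᵀ) h g - (1 : Matrix (Fin p) (Fin p) K) h g) • w g = 0 := by
          have : w h = ∑ g, (T * Tᵀ) h g • w g := by
            calc w h = ∑ i, T h i • w' i := hkey h
              _ = ∑ i, T h i • ∑ g, T g i • w g := by simp_rw [hww']
              _ = ∑ g, (T * Tᵀ) h g • w g := by
                  simp_rw [Finset.smul_sum, smul_smul]
                  rw [Finset.sum_comm]
                  simp [Matrix.mul_apply, Matrix.transpose_apply, Finset.sum_smul]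
          simp only [sub_smul, Finset.sum_sub_distrib]
          rw [← this]
          simp [Matrix.one_apply, ite_smul, Finset.sum_ite_eq']
        have := (Fintype.linearIndependent_iff.mp hw) _ h0 k
        have := sub_eq_zero.mp this
        exact this
      rw [mul_eq_one_comm] at hTT
      exact hTT
    · intro hTT i
      have : Tᵀ * T = 1 := hTT
      calc w' i = ∑ k, (Tᵀ * T) i k • w' k := by
              simp [this, Matrix.one_apply, ite_smul, Finset.sum_ite_eq']
        _ = ∑ h, T h i • w h := by
              simp_rw [hkey, Finset.smul_sum, smul_smul]
              rw [Finset.sum_comm]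
              refine Finset.sum_congr rfl fun k _ => ?_
              simp [Matrix.mul_apply, Matrix.transpose_apply, Finset.sum_smul]
  · intro c c' d d' hc hd
    -- c h = ∑ i, T h i * c' i
    have hc2 : ∀ h, c h = ∑ i, T h i * c' i := by
      intro h
      have h0 : ∑ g : Fin p, (c g - ∑ i, T g i * c' i) • v g = 0 := by
        simp only [sub_smul, Finset.sum_sub_distrib, hc]
        rw [sub_eq_zero]
        simp_rw [hT, Finset.smul_sum]
        rw [Finset.sum_comm]
        simp [Finset.sum_smul, smul_smul, mul_comm]
      have := (Fintype.linearIndependent_iff.mp hv) _ h0 h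
      exact sub_eq_zero.mp this
    -- d' i = ∑ h, T h i * d h
    have hd2 : ∀ i, d' i = ∑ h, T h i * d h := by
      intro i
      have h0 : ∑ g : Fin p, (d' g - ∑ h, T h g * d h) • w' g = 0 := by
        simp only [sub_smul, Finset.sum_sub_distrib]
        rw [sub_eq_zero, ← hd]
        simp_rw [hkey, Finset.smul_sum]
        rw [Finset.sum_comm]
        simp [Finset.sum_smul, smul_smul, mul_comm]
      have := (Fintype.linearIndependent_iff.mp hw') _ h0 i
      exact sub_eq_zero.mp this
    calc ∑ i, c i * d i = ∑ i, (∑ j, T i j * c' j) * d i := by simp_rw [hc2]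
      _ = ∑ j, c' j * ∑ i, T i j * d i := by
          simp_rw [Finset.sum_mul, Finset.mul_sum]
          rw [Finset.sum_comm]
          exact Finset.sum_congr rfl fun j _ => Finset.sum_congr rfl fun i _ => by ring
      _ = ∑ i, c' i * d' i := by simp_rw [hd2]
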